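/- Let G be a finite simple graph with n vertices and average degree d. Define ES_m(G) as the expected size, over a uniformly random ordered choice of the vertices, of the greedy independent set among the first m vertices (a vertex is included iff it precedes all its neighbors among those chosen). Then ES_m(G) ≥ ES_m(K^n_d), where K^n_d is the disjoint union of n/(d+1) cliques of size d+1 (assuming (d+1) | n). -/

import Mathlib

open Finset

lemma count_prescribed {α β : Type*} [Fintype α] [Fintype β] [DecidableEq α] [DecidableEq β]
    (h : Fintype.card α = Fintype.card β) (S : Finset α) (g : α → β)
    (hg : Set.InjOn g ↑S) [DecidablePred fun f : α ≃ β => ∀ a ∈ S, f a = g a] :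
    (Finset.univ.filter (fun f : α ≃ β => ∀ a ∈ S, f a = g a)).card
      = (Fintype.card α - S.card).factorial := by
  classical
  have key : {f : α ≃ β // ∀ a ∈ S, f a = g a}
      ≃ (((↑S : Set α)ᶜ : Set α) ≃ ((g '' ↑S : Set β)ᶜ : Set β)) := by
    refine (Equiv.subtypeEquivRight ?_).trans
      (Equiv.Set.compl (Equiv.Set.imageOfInjOn g ↑S hg))
    intro f
    constructor
    · intro hf x
      simpa [Equiv.Set.imageOfInjOn] using hf x x.2
    · intro hf a ha
      simpa [Equiv.Set.imageOfInjOn] using hf ⟨a, ha⟩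
  have hcard1 : Fintype.card ((↑S : Set α)ᶜ : Set α) = Fintype.card α - S.card := by
    rw [Fintype.card_compl_set]
    congr 1
    simpa using Fintype.card_coe S
  have hcard2 : Fintype.card ((g '' ↑S : Set β)ᶜ : Set β) = Fintype.card α - S.card := by
    rw [Fintype.card_compl_set, ← h]
    congr 1
    rw [Set.card_image_of_inj_on hg]
    simpa using Fintype.card_coe S
  rw [← Fintype.card_subtype, Fintype.card_congr key,
    Fintype.card_equiv (Fintype.equivOfCardEq (hcard1.trans hcard2.symm)), hcard1]

lemma card_inj_into {γ β : Type*} [Fintype γ] [Fintype β] [DecidableEq γ] [DecidableEq β]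
    (T : Finset β) :
    (Finset.univ.filter (fun g : γ → β => Function.Injective g ∧ ∀ x, g x ∈ T)).card
      = T.card.descFactorial (Fintype.card γ) := by
  classical
  have e : {g : γ → β // Function.Injective g ∧ ∀ x, g x ∈ T} ≃ (γ ↪ T) :=
    { toFun := fun g => ⟨fun x => ⟨g.1 x, g.2.2 x⟩,
        fun a b hab => g.2.1 (congrArg Subtype.val hab)⟩
      invFun := fun e => ⟨fun x => (e x : β),
        ⟨fun a b hab => e.injective (Subtype.ext hab), fun x => (e x).2⟩⟩
      left_inv := fun g => rfl
      right_inv := fun e => rfl }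
  rw [← Fintype.card_subtype, Fintype.card_congr e, Fintype.card_embedding_eq,
    Fintype.card_coe]

lemma count_B {n : ℕ} (G : SimpleGraph (Fin n)) [DecidableRel G.Adj] (v : Fin n) (c : Fin n) :
    (Finset.univ.filter (fun π : Equiv.Perm (Fin n) =>
        π v = c ∧ ∀ u ∈ G.neighborFinset v, c < π u)).card
      = (n - 1 - (c : ℕ)).descFactorial (G.degree v)
          * (n - 1 - G.degree v).factorial := by
  classical
  set Nv := G.neighborFinset v with hNv
  have hvNv : v ∉ Nv := SimpleGraph.notMem_neighborFinset_self G v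
  have hdeg : Nv.card = G.degree v := rfl
  set s := Finset.univ.filter (fun π : Equiv.Perm (Fin n) =>
        π v = c ∧ ∀ u ∈ Nv, c < π u) with hs
  set t := Finset.univ.filter (fun g : ↥Nv → Fin n =>
        Function.Injective g ∧ ∀ x, g x ∈ Finset.Ioi c) with ht
  have hmap : ∀ π ∈ s, (fun u : ↥Nv => π ↑u) ∈ t := by
    intro π hπ
    simp only [hs, Finset.mem_filter, Finset.mem_univ, true_and] at hπ
    refine Finset.mem_filter.mpr ⟨Finset.mem_univ _, ?_, ?_⟩
    · intro a b hab
      exact Subtype.ext (π.injective hab)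
    · intro x
      exact Finset.mem_Ioi.mpr (hπ.2 x x.2)
  rw [Finset.card_eq_sum_card_fiberwise hmap]
  have fib : ∀ g ∈ t, (s.filter (fun π => (fun u : ↥Nv => π ↑u) = g)).card
      = (n - 1 - G.degree v).factorial := by
    intro g hg
    simp only [ht, Finset.mem_filter, Finset.mem_univ, true_and] at hg
    set G₀ : Fin n → Fin n := fun a => if h : a ∈ Nv then g ⟨a, h⟩ else c with hG₀
    have hfil : s.filter (fun π => (fun u : ↥Nv => π ↑u) = g)
        = Finset.univ.filter (fun f : Equiv.Perm (Fin n) =>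
            ∀ a ∈ insert v Nv, f a = G₀ a) := by
      ext π
      simp only [hs, Finset.mem_filter, Finset.mem_univ, true_and, Finset.mem_insert]
      constructor
      · rintro ⟨⟨h1, h2⟩, h3⟩ a ha
        rcases ha with rfl | ha
        · simp [hG₀, hvNv, h1]
        · simp only [hG₀, dif_pos ha]
          exact congrFun h3 ⟨a, ha⟩
      · intro hf
        have h1 : π v = c := by simpa [hG₀, hvNv] using hf v (Or.inl rfl)
        refine ⟨⟨h1, ?_⟩, ?_⟩
        · intro u hu
          have h2 := hf u (Or.inr hu)
          simp only [hG₀, dif_pos hu] at h2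
          rw [h2]
          exact Finset.mem_Ioi.mp (hg.2 ⟨u, hu⟩)
        · funext u
          simpa [hG₀, u.2] using hf ↑u (Or.inr u.2)
    rw [hfil]
    have hinj : Set.InjOn G₀ ↑(insert v Nv) := by
      intro a ha b hb heq
      simp only [Finset.coe_insert, Set.mem_insert_iff, Finset.mem_coe] at ha hb
      rcases ha with rfl | ha <;> rcases hb with rfl | hb
      · rfl
      · exfalso
        simp only [hG₀, dif_neg hvNv, dif_pos hb] at heq
        have hlt := Finset.mem_Ioi.mp (hg.2 ⟨b, hb⟩)
        rw [← heq] at hlt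
        exact lt_irrefl c hlt
      · exfalso
        simp only [hG₀, dif_neg hvNv, dif_pos ha] at heq
        have hlt := Finset.mem_Ioi.mp (hg.2 ⟨a, ha⟩)
        rw [heq] at hlt
        exact lt_irrefl c hlt
      · simp only [hG₀, dif_pos ha, dif_pos hb] at heq
        have := hg.1 heq
        exact congrArg Subtype.val this
    have hcp := count_prescribed (α := Fin n) (β := Fin n) rfl (insert v Nv) G₀ hinj
    rw [Fintype.card_fin, Finset.card_insert_of_notMem hvNv, hdeg] at hcp
    have hnn : n - (G.degree v + 1) = n - 1 - G.degree v := by omega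
    rw [hnn] at hcp
    exact hcp
  rw [Finset.sum_congr rfl fib, Finset.sum_const, smul_eq_mul]
  congr 1
  have := card_inj_into (γ := ↥Nv) (Finset.Ioi c)
  rw [← ht] at this
  rw [this, Fintype.card_coe, hdeg, Fin.card_Ioi]

lemma count_A {n : ℕ} (G : SimpleGraph (Fin n)) [DecidableRel G.Adj] (v : Fin n)
    (m : ℕ) (hmn : m ≤ n) :
    (Finset.univ.filter (fun π : Equiv.Perm (Fin n) =>
        (π v : ℕ) < m ∧ ∀ u ∈ G.neighborFinset v, (π v : ℕ) < (π u : ℕ))).card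
      = ∑ c ∈ Finset.range m,
          (n - 1 - c).descFactorial (G.degree v) * (n - 1 - G.degree v).factorial := by
  classical
  set s := Finset.univ.filter (fun π : Equiv.Perm (Fin n) =>
      (π v : ℕ) < m ∧ ∀ u ∈ G.neighborFinset v, (π v : ℕ) < (π u : ℕ)) with hs
  have hmap : ∀ π ∈ s, (π v : ℕ) ∈ Finset.range m := by
    intro π hπ
    simp only [hs, Finset.mem_filter] at hπ
    exact Finset.mem_range.mpr hπ.2.1
  rw [Finset.card_eq_sum_card_fiberwise hmap]
  refine Finset.sum_congr rfl ?_
  intro c hc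
  have hcm : c < m := Finset.mem_range.mp hc
  have hcn : c < n := lt_of_lt_of_le hcm hmn
  have hfe : s.filter (fun π => (π v : ℕ) = c)
      = Finset.univ.filter (fun π : Equiv.Perm (Fin n) =>
          π v = (⟨c, hcn⟩ : Fin n) ∧ ∀ u ∈ G.neighborFinset v, (⟨c, hcn⟩ : Fin n) < π u) := by
    ext π
    simp only [hs, Finset.mem_filter, Finset.mem_univ, true_and]
    constructor
    · rintro ⟨⟨h1, h2⟩, h3⟩
      refine ⟨Fin.ext h3, fun u hu => ?_⟩
      rw [Fin.lt_def]
      simpa [h3] using h2 u hu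
    · rintro ⟨h1, h2⟩
      have hv : (π v : ℕ) = c := by rw [h1]
      refine ⟨⟨by omega, fun u hu => ?_⟩, hv⟩
      have := h2 u hu
      rw [Fin.lt_def] at this
      omega
  rw [hfe, count_B]

lemma descFactorial_cast_real (a : ℕ) : ∀ k : ℕ,
    ((a.descFactorial k : ℕ) : ℝ) = ∏ i ∈ Finset.range k, ((a : ℝ) - i) := by
  intro k
  induction k with
  | zero => simp
  | succ k ih =>
    rw [Nat.descFactorial_succ, Finset.prod_range_succ, ← ih]
    rcases le_or_gt k a with h | h
    · rw [Nat.cast_mul, Nat.cast_sub h]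
      ring
    · have h0 : a.descFactorial k = 0 := Nat.descFactorial_of_lt h
      have h1 : a - k = 0 := Nat.sub_eq_zero_of_le h.le
      simp [h0, h1]

lemma key_id (n k : ℕ) (hk : k ≤ n - 1) (hn : 1 ≤ n) :
    ∀ c, c ≤ n - 1 →
    (((n - 1 - c).descFactorial k : ℕ) : ℝ) * ((n - 1 - k).factorial : ℕ)
      = ((n - 1).factorial : ℝ) * ∏ i ∈ Finset.Icc 1 c, (((n : ℝ) - i - k) / ((n : ℝ) - i)) := by
  intro c
  induction c with
  | zero =>
    intro _
    have h := Nat.factorial_mul_descFactorial hk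
    have he : Finset.Icc 1 0 = (∅ : Finset ℕ) := by simp
    rw [he, Finset.prod_empty, Nat.sub_zero, mul_one]
    have h2 : (n - 1).descFactorial k * (n - 1 - k).factorial = (n - 1).factorial := by
      rw [mul_comm]; exact h
    exact_mod_cast h2
  | succ c ih =>
    intro hc1
    have hc : c ≤ n - 1 := by omega
    have hcn2 : c + 1 ≤ n - 1 := hc1
    have ha1 : 1 ≤ n - 1 - c := by omega
    set a : ℕ := n - 1 - c with ha
    have hcast_a : (a : ℝ) = (n : ℝ) - 1 - c := by
      have h' : (n - 1 - c : ℕ) = n - (1 + c) := by omega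
      rw [ha, h', Nat.cast_sub (by omega : 1 + c ≤ n)]
      push_cast
      ring
    have step : (((a - 1).descFactorial k : ℕ) : ℝ) * (a : ℝ)
        = ((a.descFactorial k : ℕ) : ℝ) * ((a : ℝ) - k) := by
      rw [descFactorial_cast_real, descFactorial_cast_real]
      have h2 := Finset.prod_range_succ' (fun i : ℕ => (a : ℝ) - i) k
      have h1 := Finset.prod_range_succ (fun i : ℕ => (a : ℝ) - i) k
      push_cast at h1 h2
      have hc2 : ∀ i ∈ Finset.range k, ((a : ℝ) - (i + 1)) = (((a - 1 : ℕ)) : ℝ) - i := by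
        intro i _
        rw [Nat.cast_sub ha1]
        push_cast
        ring
      rw [Finset.prod_congr rfl hc2] at h2
      have : (∏ i ∈ Finset.range k, (((a - 1 : ℕ) : ℝ) - i)) * ((a : ℝ) - 0)
          = (∏ i ∈ Finset.range k, ((a : ℝ) - i)) * ((a : ℝ) - k) := by
        rw [← h2, h1]
      simpa using this
    have hane : (a : ℝ) ≠ 0 := by
      have : (1 : ℝ) ≤ (a : ℝ) := by exact_mod_cast ha1
      linarith
    have hna : (n : ℝ) - (↑c + 1) = (a : ℝ) := by rw [hcast_a]; ring
    have hsub : n - 1 - (c + 1) = a - 1 := by omega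
    rw [hsub, Finset.prod_Icc_succ_top (by omega : 1 ≤ c + 1), ← mul_assoc, ← ih hc]
    push_cast
    rw [hna]
    field_simp
    linear_combination step

noncomputable def Pfun (n t x : ℕ) : ℝ := ∏ i ∈ Finset.Icc 1 t, ((n : ℝ) - i - x)

lemma Pfun_zero {n t x : ℕ} (h1 : n ≤ x + t) (h2 : x + 1 ≤ n) : Pfun n t x = 0 := by
  have hmem : (n - x) ∈ Finset.Icc 1 t := by
    rw [Finset.mem_Icc]
    omega
  refine Finset.prod_eq_zero hmem ?_
  rw [Nat.cast_sub (by omega : x ≤ n)]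
  ring

lemma Pfun_nonneg {n t x : ℕ} (h2 : x + 1 ≤ n) : 0 ≤ Pfun n t x := by
  rcases le_or_gt (x + t) n with h | h
  · refine Finset.prod_nonneg ?_
    intro i hi
    rw [Finset.mem_Icc] at hi
    have : (i : ℝ) + x ≤ n := by
      have : i + x ≤ n := by omega
      exact_mod_cast this
    linarith
  · rw [Pfun_zero (by omega) h2]

lemma Pfun_core (n : ℕ) : ∀ t x : ℕ, x + 2 + t ≤ n →
    Pfun n t x ≥ Pfun n t (x + 1) ∧ Pfun n t (x + 1) ≥ Pfun n t (x + 2)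
      ∧ Pfun n t (x + 2) ≥ 0
      ∧ Pfun n t x + Pfun n t (x + 2) ≥ 2 * Pfun n t (x + 1) := by
  intro t
  induction t with
  | zero =>
    intro x _
    simp [Pfun]
    norm_num
  | succ t ih =>
    intro x hx
    obtain ⟨hAB, hBC, hC0, hconv⟩ := ih x (by omega)
    have hP : ∀ y : ℕ, Pfun n (t + 1) y = Pfun n t y * ((n : ℝ) - (t + 1) - y) := by
      intro y
      rw [Pfun, Finset.prod_Icc_succ_top (by omega : 1 ≤ t + 1)]
      push_cast
      rfl
    have hfac : (0 : ℝ) ≤ (n : ℝ) - (t + 1) - (x + 2) := by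
      have : ((x : ℝ) + 2) + (t + 1) ≤ n := by exact_mod_cast hx
      linarith
    have hB0 : 0 ≤ Pfun n t (x + 1) := le_trans hC0 hBC
    have hA0 : 0 ≤ Pfun n t x := le_trans hB0 hAB
    rw [hP x, hP (x + 1), hP (x + 2)]
    push_cast
    refine ⟨by nlinarith, by nlinarith, by nlinarith, by nlinarith⟩

lemma Pfun_convex {n t x : ℕ} (hx : x + 3 ≤ n) :
    Pfun n t x + Pfun n t (x + 2) ≥ 2 * Pfun n t (x + 1) := by
  rcases le_or_gt (x + 2 + t) n with h | h
  · exact (Pfun_core n t x h).2.2.2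
  · have hB : Pfun n t (x + 1) = 0 := Pfun_zero (by omega) (by omega)
    have hC : Pfun n t (x + 2) = 0 := Pfun_zero (by omega) (by omega)
    have hA : 0 ≤ Pfun n t x := Pfun_nonneg (by omega)
    rw [hB, hC]
    linarith

lemma slope_mono (n t x : ℕ) : ∀ y, x ≤ y → y + 2 ≤ n →
    Pfun n t (x + 1) - Pfun n t x ≤ Pfun n t (y + 1) - Pfun n t y := by
  intro y
  induction y with
  | zero =>
    intro hxy _
    interval_cases x
    simp
  | succ y ih =>
    intro hxy hyn
    rcases Nat.eq_or_lt_of_le hxy with h | h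
    · rw [h]
    · have h1 := ih (by omega) (by omega)
      have h2 := Pfun_convex (n := n) (t := t) (x := y) (by omega)
      linarith

lemma Pfun_support (n t d : ℕ) (hd : d + 2 ≤ n) :
    ∀ a, a + 1 ≤ n →
      Pfun n t a ≥ Pfun n t d
        + ((a : ℝ) - d) * (Pfun n t (d + 1) - Pfun n t d) := by
  have upper : ∀ a, d ≤ a → a + 1 ≤ n →
      Pfun n t a ≥ Pfun n t d + ((a : ℝ) - d) * (Pfun n t (d + 1) - Pfun n t d) := by
    intro a hda
    induction a, hda using Nat.le_induction with
    | base =>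
      intro _
      have : ((d : ℝ) - d) = 0 := by ring
      rw [this, zero_mul, add_zero]
    | succ a hda ih =>
      intro ha1
      have h1 := ih (by omega)
      have h2 := slope_mono n t d a hda (by omega)
      push_cast
      linarith
  have lower : ∀ k, k ≤ d →
      Pfun n t (d - k) ≥ Pfun n t d
        + (((d - k : ℕ) : ℝ) - d) * (Pfun n t (d + 1) - Pfun n t d) := by
    intro k
    induction k with
    | zero =>
      intro _
      have h0 : ((d - 0 : ℕ) : ℝ) - (d : ℝ) = 0 := by norm_num
      rw [h0, zero_mul, add_zero]
      norm_num
    | succ k ih =>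
      intro hk
      have h1 := ih (by omega)
      have heq : d - k = (d - (k + 1)) + 1 := by omega
      have h2 := slope_mono n t (d - (k + 1)) d (by omega) (by omega)
      rw [← heq] at h2
      have hc1 : ((d - k : ℕ) : ℝ) = (d : ℝ) - k := by
        rw [Nat.cast_sub (by omega)]
      have hc2 : ((d - (k + 1) : ℕ) : ℝ) = (d : ℝ) - k - 1 := by
        rw [Nat.cast_sub (by omega)]
        push_cast
        ring
      rw [hc1] at h1
      rw [hc2]
      linarith
  intro a ha
  rcases le_or_gt d a with h | h
  · exact upper a h ha
  · have hl := lower (d - a) (by omega)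
    rw [show d - (d - a) = a by omega] at hl
    exact hl

noncomputable def Ffun (n M x : ℕ) : ℝ :=
  ∑ j ∈ Finset.Icc 1 M, ∏ i ∈ Finset.Icc 1 (j - 1), (((n : ℝ) - i - x) / ((n : ℝ) - i))

lemma Ffun_eq (n M x : ℕ) :
    Ffun n M x = ∑ j ∈ Finset.Icc 1 M,
      Pfun n (j - 1) x / ∏ i ∈ Finset.Icc 1 (j - 1), ((n : ℝ) - i) := by
  refine Finset.sum_congr rfl fun j _ => ?_
  rw [Pfun, ← Finset.prod_div_distrib]

lemma Dpos {n t : ℕ} (ht : t + 1 ≤ n) : 0 < ∏ i ∈ Finset.Icc 1 t, ((n : ℝ) - i) := by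
  refine Finset.prod_pos fun i hi => ?_
  rw [Finset.mem_Icc] at hi
  have : (i : ℝ) + 1 ≤ n := by exact_mod_cast by omega
  linarith

lemma Ffun_support (n M d a : ℕ) (hM : M ≤ n) (hd : d + 2 ≤ n) (ha : a + 1 ≤ n) :
    Ffun n M a ≥ Ffun n M d
      + ((a : ℝ) - d) * (Ffun n M (d + 1) - Ffun n M d) := by
  have key : ∀ j ∈ Finset.Icc 1 M,
      Pfun n (j-1) d / (∏ i ∈ Finset.Icc 1 (j-1), ((n : ℝ) - i))
        + ((a : ℝ) - d) * (Pfun n (j-1) (d+1) / (∏ i ∈ Finset.Icc 1 (j-1), ((n : ℝ) - i))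
            - Pfun n (j-1) d / (∏ i ∈ Finset.Icc 1 (j-1), ((n : ℝ) - i)))
      ≤ Pfun n (j-1) a / (∏ i ∈ Finset.Icc 1 (j-1), ((n : ℝ) - i)) := by
    intro j hj
    rw [Finset.mem_Icc] at hj
    have hD : 0 < ∏ i ∈ Finset.Icc 1 (j-1), ((n : ℝ) - i) := Dpos (by omega)
    have hP := Pfun_support n (j-1) d hd a ha
    rw [ge_iff_le, ← sub_nonneg] at hP
    rw [← sub_nonneg]
    have : Pfun n (j-1) a / (∏ i ∈ Finset.Icc 1 (j-1), ((n : ℝ) - i))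
        - (Pfun n (j-1) d / (∏ i ∈ Finset.Icc 1 (j-1), ((n : ℝ) - i))
          + ((a : ℝ) - d) * (Pfun n (j-1) (d+1) / (∏ i ∈ Finset.Icc 1 (j-1), ((n : ℝ) - i))
              - Pfun n (j-1) d / (∏ i ∈ Finset.Icc 1 (j-1), ((n : ℝ) - i))))
        = (Pfun n (j-1) a - (Pfun n (j-1) d
            + ((a : ℝ) - d) * (Pfun n (j-1) (d+1) - Pfun n (j-1) d)))
          / (∏ i ∈ Finset.Icc 1 (j-1), ((n : ℝ) - i)) := by
      field_simp
    rw [this]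
    exact div_nonneg hP (le_of_lt hD)
  rw [Ffun_eq, Ffun_eq, Ffun_eq, ge_iff_le]
  calc (∑ j ∈ Finset.Icc 1 M, Pfun n (j-1) d / (∏ i ∈ Finset.Icc 1 (j-1), ((n : ℝ) - i)))
        + ((a : ℝ) - d) * ((∑ j ∈ Finset.Icc 1 M,
            Pfun n (j-1) (d+1) / (∏ i ∈ Finset.Icc 1 (j-1), ((n : ℝ) - i)))
          - ∑ j ∈ Finset.Icc 1 M, Pfun n (j-1) d / (∏ i ∈ Finset.Icc 1 (j-1), ((n : ℝ) - i)))
      = ∑ j ∈ Finset.Icc 1 M,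
          (Pfun n (j-1) d / (∏ i ∈ Finset.Icc 1 (j-1), ((n : ℝ) - i))
            + ((a : ℝ) - d) * (Pfun n (j-1) (d+1) / (∏ i ∈ Finset.Icc 1 (j-1), ((n : ℝ) - i))
                - Pfun n (j-1) d / (∏ i ∈ Finset.Icc 1 (j-1), ((n : ℝ) - i)))) := by
        rw [← Finset.sum_sub_distrib, Finset.mul_sum, ← Finset.sum_add_distrib]
    _ ≤ _ := Finset.sum_le_sum key



/-- Extension of Turán's theorem: for a graph `G` on `n` vertices with average degree `d`
(with `(d+1) ∣ n`), the expected greedy independent-set size among the first `m`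
vertices of a uniformly random permutation is at least
`ES_m(K^n_d) = ∑_{j=1}^m ∏_{i=1}^{j-1} (n-i-d)/(n-i)`. -/
theorem stmt5 (n d m : ℕ) (hm1 : 1 ≤ m) (hmn : m ≤ n) (hdvd : (d + 1) ∣ n)
    (G : SimpleGraph (Fin n)) [DecidableRel G.Adj]
    (hd : ∑ v : Fin n, G.degree v = n * d) :
    (∑ π : Equiv.Perm (Fin n), ((Finset.univ.filter (fun v : Fin n =>
        (π v : ℕ) < m ∧ ∀ u ∈ G.neighborFinset v, (π v : ℕ) < (π u : ℕ))).card : ℝ))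
      / (Nat.factorial n : ℝ)
    ≥ ∑ j ∈ Finset.Icc 1 m, ∏ i ∈ Finset.Icc 1 (j - 1),
        (((n:ℝ) - i - (d : ℝ)) / ((n:ℝ) - i)) := by
  classical
  have hn1 : 1 ≤ n := le_trans hm1 hmn
  have hdeg_le : ∀ v : Fin n, G.degree v ≤ n - 1 := by
    intro v
    have := G.degree_lt_card_verts v
    rw [Fintype.card_fin] at this
    omega
  have hdn : d ≤ n - 1 := by
    have hsum : ∑ v : Fin n, G.degree v ≤ ∑ _v : Fin n, (n - 1) :=
      Finset.sum_le_sum fun v _ => hdeg_le v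
    rw [hd, Finset.sum_const, Finset.card_univ, Fintype.card_fin, smul_eq_mul] at hsum
    have h2 : n * d ≤ n * (n - 1) := by
      calc n * d = ∑ v : Fin n, G.degree v := hd.symm
        _ ≤ n * (n - 1) := by
            calc ∑ v : Fin n, G.degree v ≤ ∑ _v : Fin n, (n - 1) :=
                  Finset.sum_le_sum fun v _ => hdeg_le v
              _ = n * (n - 1) := by
                  rw [Finset.sum_const, Finset.card_univ, Fintype.card_fin, smul_eq_mul]
    exact Nat.le_of_mul_le_mul_left h2 (by omega)
  -- reindex Ffun as a sum over range m
  have reindex : ∀ x : ℕ, Ffun n m x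
      = ∑ c ∈ Finset.range m, ∏ i ∈ Finset.Icc 1 c, (((n:ℝ) - i - x) / ((n:ℝ) - i)) := by
    intro x
    rw [Ffun, show Finset.Icc 1 m = Finset.Ico 1 (m + 1) by rw [Finset.Ico_add_one_right_eq_Icc],
      Finset.sum_Ico_eq_sum_range]
    simp
  -- per-vertex expected count
  have hAv : ∀ v : Fin n, (((Finset.univ.filter (fun π : Equiv.Perm (Fin n) =>
        (π v : ℕ) < m ∧ ∀ u ∈ G.neighborFinset v, (π v : ℕ) < (π u : ℕ))).card : ℕ) : ℝ)
      = ((n-1).factorial : ℝ) * Ffun n m (G.degree v) := by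
    intro v
    rw [count_A G v m hmn, Nat.cast_sum, reindex, Finset.mul_sum]
    refine Finset.sum_congr rfl fun c hc => ?_
    have hc' : c ≤ n - 1 := by
      have := Finset.mem_range.mp hc
      omega
    have hkey := key_id n (G.degree v) (hdeg_le v) hn1 c hc'
    rw [Nat.cast_mul]
    exact hkey
  -- swap order of summation
  have swap : (∑ π : Equiv.Perm (Fin n), ((Finset.univ.filter (fun v : Fin n =>
        (π v : ℕ) < m ∧ ∀ u ∈ G.neighborFinset v, (π v : ℕ) < (π u : ℕ))).card : ℕ))
      = ∑ v : Fin n, ((Finset.univ.filter (fun π : Equiv.Perm (Fin n) =>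
        (π v : ℕ) < m ∧ ∀ u ∈ G.neighborFinset v, (π v : ℕ) < (π u : ℕ))).card : ℕ) := by
    simp_rw [Finset.card_filter]
    exact Finset.sum_comm
  -- Jensen step
  have jensen : (n : ℝ) * Ffun n m d ≤ ∑ v : Fin n, Ffun n m (G.degree v) := by
    have hsumdeg : ∑ v : Fin n, ((G.degree v : ℕ) : ℝ) = (n : ℝ) * d := by
      rw [← Nat.cast_sum, hd]
      push_cast
      ring
    rcases le_or_gt (d + 2) n with hcase | hcase
    · have hsupp : ∀ v : Fin n, Ffun n m d
          + ((G.degree v : ℝ) - d) * (Ffun n m (d + 1) - Ffun n m d)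
          ≤ Ffun n m (G.degree v) := by
        intro v
        have := Ffun_support n m d (G.degree v) hmn hcase (by have := hdeg_le v; omega)
        linarith [this]
      have hs := Finset.sum_le_sum (fun v (_ : v ∈ Finset.univ) => hsupp v)
      rw [Finset.sum_add_distrib, Finset.sum_const, Finset.card_univ, Fintype.card_fin] at hs
      have hexp : ∑ v : Fin n, ((G.degree v : ℝ) - d) * (Ffun n m (d + 1) - Ffun n m d)
          = (∑ v : Fin n, ((G.degree v : ℝ) - d)) * (Ffun n m (d + 1) - Ffun n m d) := by
        rw [Finset.sum_mul]
      have hzero : ∑ v : Fin n, ((G.degree v : ℝ) - d) = 0 := by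
        rw [Finset.sum_sub_distrib, hsumdeg, Finset.sum_const, Finset.card_univ,
          Fintype.card_fin, nsmul_eq_mul]
        ring
      rw [hexp, hzero, zero_mul, add_zero, nsmul_eq_mul] at hs
      exact hs
    · have hdeq : d = n - 1 := by omega
      have hle : ∀ v ∈ (Finset.univ : Finset (Fin n)), G.degree v ≤ d := by
        intro v _
        rw [hdeq]
        exact hdeg_le v
      have heq : ∑ v : Fin n, G.degree v = ∑ _v : Fin n, d := by
        rw [hd, Finset.sum_const, Finset.card_univ, Fintype.card_fin, smul_eq_mul]
      have hall := (Finset.sum_eq_sum_iff_of_le hle).mp heq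
      have : ∑ v : Fin n, Ffun n m (G.degree v) = ∑ _v : Fin n, Ffun n m d :=
        Finset.sum_congr rfl fun v hv => by rw [hall v hv]
      rw [this, Finset.sum_const, Finset.card_univ, Fintype.card_fin, nsmul_eq_mul]
  -- final assembly
  have hRHS : (∑ j ∈ Finset.Icc 1 m, ∏ i ∈ Finset.Icc 1 (j - 1),
      (((n:ℝ) - i - (d : ℝ)) / ((n:ℝ) - i))) = Ffun n m d := rfl
  rw [hRHS, ge_iff_le]
  have hfacpos : (0 : ℝ) < (n.factorial : ℝ) := by exact_mod_cast n.factorial_pos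
  rw [le_div_iff₀ hfacpos]
  have hcast : (∑ π : Equiv.Perm (Fin n), ((Finset.univ.filter (fun v : Fin n =>
        (π v : ℕ) < m ∧ ∀ u ∈ G.neighborFinset v, (π v : ℕ) < (π u : ℕ))).card : ℝ))
      = ((n-1).factorial : ℝ) * ∑ v : Fin n, Ffun n m (G.degree v) := by
    rw [← Nat.cast_sum, swap, Nat.cast_sum]
    rw [Finset.mul_sum]
    exact Finset.sum_congr rfl fun v _ => hAv v
  rw [hcast]
  have hnfac : (n.factorial : ℝ) = (n : ℝ) * ((n-1).factorial : ℝ) := by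
    rw [← Nat.cast_mul]
    congr 1
    exact (Nat.mul_factorial_pred (by omega)).symm
  rw [hnfac]
  have hfp : (0:ℝ) ≤ ((n-1).factorial : ℝ) := by positivity
  calc Ffun n m d * ((n:ℝ) * ((n-1).factorial : ℝ))
      = ((n-1).factorial : ℝ) * ((n:ℝ) * Ffun n m d) := by ring
    _ ≤ ((n-1).factorial : ℝ) * ∑ v : Fin n, Ffun n m (G.degree v) :=
        mul_le_mul_of_nonneg_left jensen hfp
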